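/- Let n > a1 ≥ 1 and a1 < a2 < n be integers and let G = C_n^+(a1,a2) be the directed circulant graph on Z/nZ. If a circuit on G has walk sum mn for a positive integer m, then for every vertex v of G the circuit passes v exactly m times. The same holds for periodic orbits and for pseudo orbits of walk sum mn. -/

import Mathlib

/-!
Directed circulant graphs `C_n^+(a1,a2)` on the vertex set `ZMod n`:
circuits, periodic orbits, and pseudo orbits.

Each vertex `v` has exactly two outgoing bonds `(v, v + a1)` and `(v, v + a2)`
(taken mod `n`), where `0 < a1 < a2 < n`.  A bond is recorded by its origin
vertex together with its arc (`a1` or `a2`).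
-/

/-- The list of bonds (origin vertex, arc) of the walk starting at `v`
following the given list of arcs, on the circulant graph with vertex set `ZMod n`. -/
def bondsFrom (n : ℕ) : ZMod n → List ℕ → List (ZMod n × ℕ)
  | _, [] => []
  | v, a :: as => (v, a) :: bondsFrom n (v + (a : ZMod n)) as

/-- A circuit on the directed circulant graph `C_n^+(a1,a2)`: a starting vertex
together with a nonempty list of arcs, each equal to `a1` or `a2`, whose sum is
`0` modulo `n` (so that the walk returns to its starting vertex). -/
structure Circuit (n a1 a2 : ℕ) where
  start : ZMod n
  arcs : List ℕ
  arcs_ne : arcs ≠ []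
  arcs_mem : ∀ a ∈ arcs, a = a1 ∨ a = a2
  closed : ((arcs.sum : ℕ) : ZMod n) = 0

namespace Circuit

variable {n a1 a2 : ℕ}

/-- The length of a circuit: its number of bonds. -/
def len (c : Circuit n a1 a2) : ℕ := c.arcs.length

/-- The walk sum of a circuit: the sum of the arcs of its bonds. -/
def walkSum (c : Circuit n a1 a2) : ℕ := c.arcs.sum

/-- The list of bonds of a circuit, in order. -/
def bonds (c : Circuit n a1 a2) : List (ZMod n × ℕ) := bondsFrom n c.start c.arcs

/-- The number of times a circuit passes the vertex `v`: the number of bonds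
`(v₀, a)` of the circuit such that the residue of `v - v₀` in `{0, ..., n-1}`
is strictly smaller than the arc `a` (equivalently, than the residue of the
difference of the terminal and origin vertices of the bond). -/
def passCount (c : Circuit n a1 a2) (v : ZMod n) : ℕ :=
  c.bonds.countP fun b => decide ((v - b.1).val < b.2)

/-- The cyclic rotation of a circuit by `k` steps. -/
def rotate (c : Circuit n a1 a2) (k : ℕ) : Circuit n a1 a2 where
  start := c.start + (((c.arcs.take k).sum : ℕ) : ZMod n)
  arcs := c.arcs.rotate k
  arcs_ne := fun h => c.arcs_ne (by rwa [List.rotate_eq_nil_iff] at h)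
  arcs_mem := fun a ha => c.arcs_mem a (List.mem_rotate.mp ha)
  closed := by
    rw [show (c.arcs.rotate k).sum = c.arcs.sum from (c.arcs.rotate_perm k).sum_eq]
    exact c.closed

/-- A circuit is primitive if it does not consist of a strictly shorter circuit
repeated two or more times. -/
def IsPrimitive (c : Circuit n a1 a2) : Prop :=
  ¬ ∃ (w : List ℕ) (r : ℕ), 2 ≤ r ∧ ((w.sum : ℕ) : ZMod n) = 0 ∧
      c.arcs = (List.replicate r w).flatten

end Circuit

/-- Two circuits are related if the second is a cyclic rotation of the first. -/
def RotRel {n a1 a2 : ℕ} (c c' : Circuit n a1 a2) : Prop := ∃ k, c.rotate k = c'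

/-- A periodic orbit: an equivalence class of circuits under cyclic rotation. -/
def PeriodicOrbit (n a1 a2 : ℕ) : Type := Quot (@RotRel n a1 a2)

namespace PeriodicOrbit

variable {n a1 a2 : ℕ}

/-- The periodic orbit of a circuit. -/
def mk (c : Circuit n a1 a2) : PeriodicOrbit n a1 a2 := Quot.mk _ c

/-- The length of a periodic orbit: the length of any representative circuit. -/
def len : PeriodicOrbit n a1 a2 → ℕ :=
  Quot.lift Circuit.len (by
    rintro c c' ⟨k, rfl⟩
    simp [Circuit.len, Circuit.rotate])

/-- The walk sum of a periodic orbit: the walk sum of any representative circuit. -/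
def walkSum : PeriodicOrbit n a1 a2 → ℕ :=
  Quot.lift Circuit.walkSum (by
    rintro c c' ⟨k, rfl⟩
    exact ((c.arcs.rotate_perm k).sum_eq).symm)

/-- A periodic orbit is primitive if it is the class of a primitive circuit. -/
def IsPrimitive (γ : PeriodicOrbit n a1 a2) : Prop :=
  ∃ c : Circuit n a1 a2, mk c = γ ∧ c.IsPrimitive

/-- The multiset of bonds of a periodic orbit (computed from a representative;
this is independent of the representative since rotation permutes the bonds). -/
noncomputable def bonds (γ : PeriodicOrbit n a1 a2) : Multiset (ZMod n × ℕ) :=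
  ((Quot.exists_rep γ).choose.bonds : Multiset (ZMod n × ℕ))

/-- The number of times a periodic orbit passes a vertex (computed from a
representative; this is independent of the representative). -/
noncomputable def passCount (γ : PeriodicOrbit n a1 a2) (v : ZMod n) : ℕ :=
  (Quot.exists_rep γ).choose.passCount v

end PeriodicOrbit

/-- A pseudo orbit: a finite collection of periodic orbits. -/
abbrev PseudoOrbit (n a1 a2 : ℕ) := Multiset (PeriodicOrbit n a1 a2)

namespace PseudoOrbit

variable {n a1 a2 : ℕ}

/-- The length of a pseudo orbit: the sum of the lengths of its members. -/
def len (ps : PseudoOrbit n a1 a2) : ℕ := (ps.map PeriodicOrbit.len).sum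

/-- The walk sum of a pseudo orbit: the sum of the walk sums of its members. -/
def walkSum (ps : PseudoOrbit n a1 a2) : ℕ := (ps.map PeriodicOrbit.walkSum).sum

/-- A pseudo orbit is primitive if its members are primitive and pairwise distinct. -/
def IsPrimitive (ps : PseudoOrbit n a1 a2) : Prop :=
  (∀ γ ∈ ps, PeriodicOrbit.IsPrimitive γ) ∧ ps.Nodup

/-- The multiset of bonds of a pseudo orbit, counted with multiplicity over all
member periodic orbits. -/
noncomputable def bonds (ps : PseudoOrbit n a1 a2) : Multiset (ZMod n × ℕ) :=
  (ps.map PeriodicOrbit.bonds).sum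

/-- The multiset of origin vertices of the bonds of a pseudo orbit, with multiplicity. -/
noncomputable def origins (ps : PseudoOrbit n a1 a2) : Multiset (ZMod n) :=
  ps.bonds.map Prod.fst

/-- A pseudo orbit has no self-intersection if no vertex occurs more than once
among the origin vertices of its bonds. -/
def NoSelfIntersection (ps : PseudoOrbit n a1 a2) : Prop :=
  ∀ v : ZMod n, ps.origins.count v ≤ 1

/-- The number of vertices occurring exactly twice among the origin vertices of
the bonds of a pseudo orbit. -/
noncomputable def twoEncounterCount (ps : PseudoOrbit n a1 a2) : ℕ :=
  (ps.origins.toFinset.filter fun v => ps.origins.count v = 2).card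

/-- The pseudo orbit has exactly `N` self-intersections, each a 2-encounter of
length zero, and no other self-intersection: exactly `N` vertices occur exactly
twice among the origin vertices of its bonds, no vertex occurs more than twice,
and no bond occurs more than once. -/
def OnlyTwoEncounters (ps : PseudoOrbit n a1 a2) (N : ℕ) : Prop :=
  ps.bonds.Nodup ∧ (∀ v : ZMod n, ps.origins.count v ≤ 2) ∧ ps.twoEncounterCount = N

/-- The number of times a pseudo orbit passes a vertex: the total over its members. -/
noncomputable def passCount (ps : PseudoOrbit n a1 a2) (v : ZMod n) : ℕ :=
  (ps.map fun γ => γ.passCount v).sum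

end PseudoOrbit


section MyAux

lemma myAux.split (a s : ℕ) (p : ℕ → Prop) [DecidablePred p] :
    ((Finset.range (a + s)).filter p).card =
      ((Finset.range a).filter p).card + ((Finset.range s).filter (fun x => p (a + x))).card := by
  rw [Finset.range_add, Finset.filter_union, Finset.card_union_of_disjoint, Finset.filter_map,
    Finset.card_map]
  · rfl
  · rw [Finset.disjoint_left]
    intro x hx hx'
    simp only [Finset.mem_filter, Finset.mem_range, Finset.mem_map, addLeftEmbedding_apply] at hx hx'
    omega

lemma myAux.base (n : ℕ) [NeZero n] (a : ℕ) (ha : a ≤ n) (c : ZMod n) :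
    ((Finset.range a).filter (fun x : ℕ => (x : ZMod n) = c)).card =
      if c.val < a then 1 else 0 := by
  have h : ∀ x ∈ Finset.range a, ((x : ZMod n) = c ↔ x = c.val) := by
    intro x hx
    rw [Finset.mem_range] at hx
    constructor
    · intro h; rw [← h, ZMod.val_natCast, Nat.mod_eq_of_lt (by omega)]
    · rintro rfl; exact ZMod.natCast_zmod_val c
  rw [Finset.filter_congr h, Finset.filter_eq']
  split_ifs with h1 h2 h2 <;> simp_all [Finset.mem_range]

lemma myAux.main (n : ℕ) [NeZero n] (as : List ℕ) (h : ∀ a ∈ as, 0 < a ∧ a ≤ n) :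
    ∀ w v : ZMod n,
    ((bondsFrom n w as).countP fun b => decide ((v - b.1).val < b.2)) =
      ((Finset.range as.sum).filter (fun x : ℕ => (x : ZMod n) = v - w)).card := by
  induction as with
  | nil => intro w v; simp [bondsFrom]
  | cons a as ih =>
    intro w v
    have ha := h a List.mem_cons_self
    simp only [bondsFrom, List.countP_cons, List.sum_cons]
    rw [myAux.split, myAux.base n a ha.2 (v - w)]
    have hc : ∀ x ∈ Finset.range as.sum,
        ((((a + x : ℕ)) : ZMod n) = v - w ↔ (x : ZMod n) = v - (w + a)) := by
      intro x _
      push_cast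
      constructor
      · intro hh; linear_combination hh
      · intro hh; linear_combination hh
    rw [Finset.filter_congr hc, ← ih (fun b hb => h b (List.mem_cons_of_mem a hb)) (w + (a : ZMod n)) v]
    simp only [decide_eq_true_eq]
    omega

lemma myAux.count (n : ℕ) [NeZero n] (k : ℕ) (c : ZMod n) :
    ((Finset.range (k * n)).filter (fun x : ℕ => (x : ZMod n) = c)).card = k := by
  induction k with
  | zero => simp
  | succ k ih =>
    have : (k + 1) * n = n + k * n := by ring
    rw [this, myAux.split, myAux.base n n le_rfl c, if_pos (ZMod.val_lt c)]
    have hc : ∀ x ∈ Finset.range (k * n), ((((n + x : ℕ)) : ZMod n) = c ↔ (x : ZMod n) = c) := by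
      intro x _; push_cast; simp
    rw [Finset.filter_congr hc, ih]
    omega

lemma myAux.circuit (n a1 a2 : ℕ) (ha1 : 1 ≤ a1) (h12 : a1 < a2) (h2n : a2 < n)
    (c : Circuit n a1 a2) (v : ZMod n) :
    c.passCount v * n = c.walkSum := by
  have hn : 0 < n := by omega
  haveI : NeZero n := ⟨hn.ne'⟩
  have hmem : ∀ a ∈ c.arcs, 0 < a ∧ a ≤ n := by
    intro a ha; rcases c.arcs_mem a ha with rfl | rfl <;> omega
  obtain ⟨k, hk⟩ : n ∣ c.arcs.sum := by
    have h0 := c.closed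
    rwa [ZMod.natCast_eq_zero_iff] at h0
  have h1 : c.passCount v = k := by
    rw [Circuit.passCount, Circuit.bonds, myAux.main n c.arcs hmem c.start v, hk, mul_comm,
      myAux.count]
  rw [h1, Circuit.walkSum, hk, mul_comm]

lemma myAux.orbit (n a1 a2 : ℕ) (ha1 : 1 ≤ a1) (h12 : a1 < a2) (h2n : a2 < n)
    (γ : PeriodicOrbit n a1 a2) (v : ZMod n) :
    γ.passCount v * n = γ.walkSum := by
  have hc := (Quot.exists_rep γ).choose_spec
  have h1 : γ.passCount v = (Quot.exists_rep γ).choose.passCount v := rfl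
  have h2 : γ.walkSum = (Quot.exists_rep γ).choose.walkSum := by
    conv_lhs => rw [← hc]
    unfold PeriodicOrbit.walkSum
    rfl
  rw [h1, h2]
  exact myAux.circuit n a1 a2 ha1 h12 h2n _ v

end MyAux

/-- On `C_n^+(a1,a2)` (with `n > a1 ≥ 1`, `a1 < a2 < n`), any
circuit with walk sum `m * n` (`m` a positive integer) passes every vertex
exactly `m` times; likewise for periodic orbits and pseudo orbits of walk sum `m * n`. -/
theorem passCount_of_walkSum
    (n a1 a2 : ℕ) (ha1 : 1 ≤ a1) (h1n : a1 < n) (h12 : a1 < a2) (h2n : a2 < n)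
    (m : ℕ) (hm : 0 < m) :
    (∀ c : Circuit n a1 a2, c.walkSum = m * n → ∀ v : ZMod n, c.passCount v = m) ∧
    (∀ γ : PeriodicOrbit n a1 a2, γ.walkSum = m * n → ∀ v : ZMod n, γ.passCount v = m) ∧
    (∀ ps : PseudoOrbit n a1 a2, ps.walkSum = m * n → ∀ v : ZMod n, ps.passCount v = m) := by
  have hn : 0 < n := by omega
  refine ⟨fun c hc v => ?_, fun γ hγ v => ?_, fun ps hps v => ?_⟩
  · have h := myAux.circuit n a1 a2 ha1 h12 h2n c v
    rw [hc] at h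
    exact Nat.eq_of_mul_eq_mul_right hn h
  · have h := myAux.orbit n a1 a2 ha1 h12 h2n γ v
    rw [hγ] at h
    exact Nat.eq_of_mul_eq_mul_right hn h
  · have h : ps.passCount v * n = ps.walkSum := by
      rw [PseudoOrbit.passCount, PseudoOrbit.walkSum, ← Multiset.sum_map_mul_right]
      congr 1
      exact Multiset.map_congr rfl fun γ _ => myAux.orbit n a1 a2 ha1 h12 h2n γ v
    rw [hps] at h
    exact Nat.eq_of_mul_eq_mul_right hn h
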